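/- Let p > 0 and let μ be a probability measure on ℝⁿ with ∫|x| dμ < ∞. For δ > 0 define ψ_δ(x) = −δ + ε|x| with ε = δ^{1 + p/(4n)}. Then for all sufficiently small δ > 0, I_{μ,p}(ψ_δ) = ∫ ψ_δ dμ + (∫_{ℝⁿ} (ψ_δ*(x))^{-(n+p)} dx)^{-2/p} < 0. -/

import Mathlib

open MeasureTheory Filter
open scoped ENNReal RealInnerProductSpace

noncomputable section

abbrev En (n : ℕ) := EuclideanSpace ℝ (Fin n)

/-- Legendre transform of an `EReal`-valued function: `ψ*(y) = sup_{x ∈ dom ψ} (⟨x,y⟩ - ψ x)`. -/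
def legendre {n : ℕ} (ψ : En n → EReal) (y : En n) : EReal :=
  ⨆ x : {x : En n // ψ x < ⊤}, ((⟪x.1, y⟫ : ℝ) : EReal) - ψ x.1

/-- Convexity for `ℝ ∪ {+∞}`-valued functions. -/
def EConvexOn {n : ℕ} (ψ : En n → EReal) : Prop :=
  ∀ x y : En n, ∀ a b : ℝ, 0 ≤ a → 0 ≤ b → a + b = 1 →
    ψ (a • x + b • y) ≤ (a : EReal) * ψ x + (b : EReal) * ψ y

/-- `t ^ (-s)` with the conventions `0^(-s) = ∞`, `∞^(-s) = 0` (for `s > 0`). -/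
def negPow (t : EReal) (s : ℝ) : ℝ≥0∞ :=
  if t = ⊤ then 0 else if t ≤ 0 then ⊤ else ENNReal.ofReal (t.toReal ^ (-s))

/-- `I_p(ψ) = (∫ (ψ*)^{-(n+p)})^{-1/p} ∈ [0,∞]`. -/
def Ip (n : ℕ) (p : ℝ) (ψ : En n → EReal) : ℝ≥0∞ :=
  (∫⁻ x, negPow (legendre ψ x) ((n : ℝ) + p)) ^ (-(1 : ℝ) / p)

/-- The functional `I_{μ,p}(ψ) = ∫ ψ dμ + (∫ (ψ*)^{-(n+p)})^{-2/p}`, with values in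
`ℝ ∪ {±∞}`. -/
def Imup (n : ℕ) (p : ℝ) (μ : Measure (En n)) (ψ : En n → EReal) : EReal :=
  ((∫ x, (ψ x).toReal ∂μ : ℝ) : EReal) +
    (((∫⁻ x, negPow (legendre ψ x) ((n : ℝ) + p)) ^ (-(2 : ℝ) / p) : ℝ≥0∞) : EReal)


lemma leg_le {n : ℕ} {δ ε : ℝ} {y : En n} (hy : ‖y‖ ≤ ε) :
    legendre (fun x : En n => ((-δ + ε * ‖x‖ : ℝ) : EReal)) y ≤ ((δ : ℝ) : EReal) := by
  apply iSup_le
  rintro ⟨x, -⟩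
  rw [show ((⟪x, y⟫ : ℝ) : EReal) - ((-δ + ε * ‖x‖ : ℝ) : EReal)
      = ((⟪x, y⟫ - (-δ + ε * ‖x‖) : ℝ) : EReal) from (EReal.coe_sub _ _).symm,
    EReal.coe_le_coe_iff]
  have h1 : ⟪x, y⟫ ≤ ‖x‖ * ‖y‖ := real_inner_le_norm x y
  nlinarith [norm_nonneg x, mul_le_mul_of_nonneg_left hy (norm_nonneg x)]

lemma negPow_ge {t : EReal} {δ s : ℝ} (hδ : 0 < δ) (hs : 0 ≤ s) (ht : t ≤ ((δ : ℝ) : EReal)) :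
    ENNReal.ofReal (δ ^ (-s)) ≤ negPow t s := by
  unfold negPow
  have htop : t ≠ ⊤ := ne_top_of_le_ne_top (EReal.coe_ne_top δ) ht
  rw [if_neg htop]
  by_cases h0 : t ≤ 0
  · rw [if_pos h0]; exact le_top
  · rw [if_neg h0]
    push_neg at h0
    have hbot : t ≠ ⊥ := (lt_of_le_of_lt bot_le h0).ne'
    have h1 : (0 : ℝ) < t.toReal := by
      have h0' : ((0 : ℝ) : EReal) < (t.toReal : EReal) := by
        rw [EReal.coe_toReal htop hbot]; exact_mod_cast h0
      exact_mod_cast h0'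
    have h2 : t.toReal ≤ δ := by
      have := EReal.toReal_le_toReal ht hbot (EReal.coe_ne_top δ)
      simpa using this
    exact ENNReal.ofReal_le_ofReal
      (Real.rpow_le_rpow_of_nonpos h1 h2 (neg_nonpos.mpr hs))

theorem statement8 {n : ℕ} (hn : 0 < n) (p : ℝ) (hp : 0 < p) (μ : Measure (En n))
    [IsProbabilityMeasure μ] (hmom : Integrable (fun x : En n => ‖x‖) μ) :
    ∃ δ₀ > (0 : ℝ), ∀ δ : ℝ, 0 < δ → δ < δ₀ →
      Imup n p μ (fun x => ((-δ + δ ^ (1 + p / (4 * (n : ℝ))) * ‖x‖ : ℝ) : EReal)) < 0 := by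
  have hn' : (0 : ℝ) < n := by exact_mod_cast hn
  set q : ℝ := p / (4 * (n : ℝ)) with hq_def
  have hq : 0 < q := div_pos hp (by positivity)
  set V : ℝ := (volume (Metric.closedBall (0 : En n) 1)).toReal with hV_def
  have hVfin : volume (Metric.closedBall (0 : En n) 1) ≠ ⊤ := measure_closedBall_lt_top.ne
  have hVpos : 0 < V :=
    ENNReal.toReal_pos (Metric.measure_closedBall_pos _ _ one_pos).ne' hVfin
  set A : ℝ := V ^ (-(2 : ℝ) / p) with hA_def
  have hA : 0 < A := Real.rpow_pos_of_pos hVpos _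
  set M : ℝ := ∫ x, ‖x‖ ∂μ with hM_def
  have hM : 0 ≤ M := integral_nonneg fun x => norm_nonneg x
  -- smallness of the error terms
  have hcont : ContinuousAt (fun δ : ℝ => M * δ ^ q + A * δ ^ ((1 : ℝ) / 2)) 0 := by
    exact (continuousAt_const.mul (Real.continuousAt_rpow_const 0 q (Or.inr hq.le))).add
      (continuousAt_const.mul (Real.continuousAt_rpow_const 0 _ (Or.inr (by norm_num))))
  have h0 : (fun δ : ℝ => M * δ ^ q + A * δ ^ ((1 : ℝ) / 2)) 0 = 0 := by
    simp [Real.zero_rpow hq.ne', Real.zero_rpow (show (1 : ℝ) / 2 ≠ 0 by norm_num)]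
  have htend := hcont.tendsto
  rw [show M * (0:ℝ) ^ q + A * (0:ℝ) ^ ((1:ℝ)/2) = 0 from h0,
    Metric.tendsto_nhds_nhds] at htend
  obtain ⟨δ₀, hδ₀, hsmall⟩ := htend 1 one_pos
  refine ⟨δ₀, hδ₀, fun δ hδ hδlt => ?_⟩
  set ε : ℝ := δ ^ (1 + q) with hε_def
  have hε : 0 < ε := Real.rpow_pos_of_pos hδ _
  set s : ℝ := (n : ℝ) + p with hs_def
  have hs : 0 ≤ s := by positivity
  set ψ : En n → EReal := fun x => ((-δ + ε * ‖x‖ : ℝ) : EReal) with hψ_def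
  -- step 1 : the μ-integral
  have hI1 : (∫ x, (ψ x).toReal ∂μ) = -δ + ε * M := by
    simp only [hψ_def, EReal.toReal_coe]
    rw [integral_add (integrable_const _) (hmom.const_mul ε), integral_const,
      integral_const_mul]
    simp [hM_def]
  -- step 2 : lower bound for the lintegral
  have hLlow : ENNReal.ofReal (δ ^ (-s)) * volume (Metric.closedBall (0 : En n) ε)
      ≤ ∫⁻ x, negPow (legendre ψ x) s := by
    rw [← lintegral_indicator_const (measurableSet_closedBall)]
    apply lintegral_mono
    intro y
    by_cases hy : y ∈ Metric.closedBall (0 : En n) ε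
    · rw [Set.indicator_of_mem hy]
      have hy' : ‖y‖ ≤ ε := by simpa [Metric.mem_closedBall, dist_zero_right] using hy
      exact negPow_ge hδ hs (leg_le hy')
    · rw [Set.indicator_of_notMem hy]; exact zero_le
  -- rewrite the lower bound as ofReal of a real number
  have hvol : ENNReal.ofReal (δ ^ (-s)) * volume (Metric.closedBall (0 : En n) ε)
      = ENNReal.ofReal (δ ^ (-s) * (ε ^ n * V)) := by
    rw [Measure.addHaar_closedBall' _ _ hε.le, finrank_euclideanSpace_fin,
      ← ENNReal.ofReal_toReal hVfin, ← hV_def, ← ENNReal.ofReal_mul (by positivity),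
      ← ENNReal.ofReal_mul (by positivity)]
  -- step 3 : the resulting bound on the rpow term
  have hr : (0 : ℝ) < δ ^ (-s) * (ε ^ n * V) := by positivity
  have hT : (∫⁻ x, negPow (legendre ψ x) s) ^ (-(2 : ℝ) / p)
      ≤ ENNReal.ofReal ((δ ^ (-s) * (ε ^ n * V)) ^ (-(2 : ℝ) / p)) := by
    rw [← ENNReal.ofReal_rpow_of_pos hr]
    rw [show (-(2 : ℝ) / p) = -(2 / p) by ring, ENNReal.rpow_neg, ENNReal.rpow_neg]
    exact ENNReal.inv_le_inv.mpr
      (ENNReal.rpow_le_rpow (hvol ▸ hLlow) (by positivity))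
  -- step 4 : compute the real value
  have e1 : ε ^ n = δ ^ ((1 + q) * (n : ℝ)) := by
    rw [hε_def, ← Real.rpow_natCast (δ ^ (1 + q)) n, ← Real.rpow_mul hδ.le]
  have e3 : -s + (1 + q) * (n : ℝ) = -(3 * p / 4) := by
    rw [hq_def, hs_def]; field_simp; ring
  have hCval : (δ ^ (-s) * (ε ^ n * V)) ^ (-(2 : ℝ) / p) = A * δ ^ ((3 : ℝ) / 2) := by
    rw [e1, ← mul_assoc, ← Real.rpow_add hδ, e3,
      Real.mul_rpow (by positivity) hVpos.le, hA_def,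
      ← Real.rpow_mul hδ.le]
    rw [show -(3 * p / 4) * (-(2 : ℝ) / p) = 3 / 2 by field_simp; ring]
    ring
  -- step 5 : assemble
  have hcoe : (((∫⁻ x, negPow (legendre ψ x) ((n : ℝ) + p)) ^ (-(2 : ℝ) / p) : ℝ≥0∞) : EReal)
      ≤ ((A * δ ^ ((3 : ℝ) / 2) : ℝ) : EReal) := by
    refine le_trans (EReal.coe_ennreal_le_coe_ennreal_iff.mpr (hs_def ▸ hT)) ?_
    rw [hCval, EReal.coe_ennreal_ofReal, max_eq_left (by positivity)]
  have key : Imup n p μ ψ ≤ (((-δ + ε * M) + A * δ ^ ((3 : ℝ) / 2) : ℝ) : EReal) := by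
    unfold Imup
    rw [hI1, EReal.coe_add (-δ + ε * M)]
    exact add_le_add le_rfl hcoe
  refine lt_of_le_of_lt key ?_
  have hf := hsmall (show dist δ 0 < δ₀ by
    rw [Real.dist_eq, sub_zero, abs_of_pos hδ]; exact hδlt)
  rw [Real.dist_eq, sub_zero] at hf
  have hf' : M * δ ^ q + A * δ ^ ((1 : ℝ) / 2) < 1 := lt_of_le_of_lt (le_abs_self _) hf
  have e4 : ε = δ * δ ^ q := by rw [hε_def, Real.rpow_add hδ, Real.rpow_one]
  have e5 : δ ^ ((3 : ℝ) / 2) = δ * δ ^ ((1 : ℝ) / 2) := by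
    rw [show (3 : ℝ) / 2 = 1 + 1 / 2 by norm_num, Real.rpow_add hδ, Real.rpow_one]
  have hreal : -δ + ε * M + A * δ ^ ((3 : ℝ) / 2) < 0 := by
    rw [e4, e5]
    calc -δ + δ * δ ^ q * M + A * (δ * δ ^ ((1 : ℝ) / 2))
        = δ * ((M * δ ^ q + A * δ ^ ((1 : ℝ) / 2)) - 1) := by ring
      _ < 0 := mul_neg_of_pos_of_neg hδ (by linarith)
  exact_mod_cast hreal
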